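/- Assume H(A), H(B), H(J), H(f), H(u₀) and (H_s), fix z ∈ V and g ∈ V*, and let V^h ⊆ V be a finite-dimensional subspace. Then the functional L(w) = ½⟨Aw,w⟩ + ⟨Bz − g, w⟩ + J(γz, γw) attains a unique global minimizer over V^h; equivalently, there is exactly one v^h ∈ V^h with 0 ∈ ∂(L|_{V^h})(v^h). Consequently, Problem P_opt^h has a unique solution. -/

import Mathlib

open Filter MeasureTheory Set

noncomputable def clarkeDeriv {Y : Type*} [NormedAddCommGroup Y] [NormedSpace ℝ Y]
    (φ : Y → ℝ) (y z : Y) : ℝ :=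
  Filter.limsup (fun p : Y × ℝ => (φ (p.1 + p.2 • z) - φ p.1) / p.2)
    ((nhds y) ×ˢ (nhdsWithin 0 (Set.Ioi 0)))

def clarkeSubdiff {Y : Type*} [NormedAddCommGroup Y] [NormedSpace ℝ Y]
    (φ : Y → ℝ) (y : Y) : Set (Y →L[ℝ] ℝ) :=
  {ξ | ∀ z, ξ z ≤ clarkeDeriv φ y z}

set_option maxHeartbeats 1600000

section helpers
variable {α : Type*} {F : Filter α} {u v : α → ℝ} {a c : ℝ}

lemma bdd_above_of_abs (h : ∀ᶠ x in F, |u x| ≤ c) : F.IsBoundedUnder (· ≤ ·) u :=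
  Filter.isBoundedUnder_of_eventually_le (h.mono fun x hx => (abs_le.1 hx).2)

lemma bdd_below_of_abs (h : ∀ᶠ x in F, |u x| ≤ c) : F.IsBoundedUnder (· ≥ ·) u :=
  Filter.isBoundedUnder_of_eventually_ge (h.mono fun x hx => (abs_le.1 hx).1)

lemma cobdd_of_abs [F.NeBot] (h : ∀ᶠ x in F, |u x| ≤ c) : F.IsCoboundedUnder (· ≤ ·) u :=
  (bdd_below_of_abs h).isCoboundedUnder_le

lemma real_limsup_le_of_forall_gt [F.NeBot]
    (hc : F.IsCoboundedUnder (· ≤ ·) u)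
    (h : ∀ r, a < r → ∀ᶠ x in F, u x ≤ r) : Filter.limsup u F ≤ a := by
  refine le_of_forall_pos_le_add fun ε hε => ?_
  exact Filter.limsup_le_of_le hc (h (a + ε) (by linarith))

end helpers

namespace Clarke

variable {Y : Type*} [NormedAddCommGroup Y] [NormedSpace ℝ Y] {φ : Y → ℝ}

noncomputable def cq (φ : Y → ℝ) (z : Y) : Y × ℝ → ℝ :=
  fun p => (φ (p.1 + p.2 • z) - φ p.1) / p.2

def cf (y : Y) : Filter (Y × ℝ) := (nhds y) ×ˢ (nhdsWithin (0:ℝ) (Set.Ioi 0))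

instance cf_neBot (y : Y) : (cf y).NeBot := by
  unfold cf; infer_instance

lemma clarkeDeriv_eq (φ : Y → ℝ) (y z : Y) :
    clarkeDeriv φ y z = Filter.limsup (cq φ z) (cf y) := rfl

lemma eventually_pos (y : Y) : ∀ᶠ p in cf y, (0:ℝ) < p.2 := by
  have h : Set.Ioi (0:ℝ) ∈ nhdsWithin (0:ℝ) (Set.Ioi 0) := self_mem_nhdsWithin
  filter_upwards [Filter.prod_mem_prod (univ_mem : Set.univ ∈ nhds y) h] with p hp using hp.2

lemma cq_bound (φ : Y → ℝ) (hφ : LocallyLipschitz φ) (y : Y) :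
    ∃ K : ℝ, 0 ≤ K ∧ ∀ z : Y, ∀ᶠ p in cf y, |cq φ z p| ≤ K * ‖z‖ := by
  obtain ⟨K, t, ht, hK⟩ := hφ y
  obtain ⟨ε, hε, hball⟩ := Metric.mem_nhds_iff.1 ht
  refine ⟨K, K.2, fun z => ?_⟩
  have h1 : Metric.ball y (ε/2) ∈ nhds y := Metric.ball_mem_nhds y (by linarith)
  have h2 : Set.Ioo (0:ℝ) (ε/(2*(‖z‖+1))) ∈ nhdsWithin (0:ℝ) (Set.Ioi 0) := by
    apply Ioo_mem_nhdsGT_of_mem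
    exact ⟨le_rfl, by positivity⟩
  filter_upwards [Filter.prod_mem_prod h1 h2] with p hp
  obtain ⟨hp1, hp2⟩ := hp
  have hz1 : 0 ≤ ‖z‖ := norm_nonneg z
  have hp2' : 0 < p.2 := hp2.1
  have hb1 : p.1 ∈ Metric.ball y ε := by
    have := mem_ball_iff_norm.1 hp1
    rw [mem_ball_iff_norm]
    linarith
  have hkey : p.2 * ‖z‖ < ε / 2 := by
    have he : ε/(2*(‖z‖+1))*(‖z‖+1) = ε/2 := by field_simp
    nlinarith [hp2.2, hp2.1]
  have hb2 : p.1 + p.2 • z ∈ Metric.ball y ε := by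
    rw [mem_ball_iff_norm]
    have h5 : ‖p.1 + p.2 • z - y‖ ≤ ‖p.1 - y‖ + ‖p.2 • z‖ := by
      have : p.1 + p.2 • z - y = (p.1 - y) + p.2 • z := by abel
      rw [this]; exact norm_add_le _ _
    have h3 : ‖p.2 • z‖ = p.2 * ‖z‖ := by
      rw [norm_smul, Real.norm_eq_abs, abs_of_pos hp2']
    have h4 := mem_ball_iff_norm.1 hp1
    rw [h3] at h5
    linarith
  have hd : dist (φ (p.1 + p.2 • z)) (φ p.1) ≤ K * dist (p.1 + p.2 • z) p.1 :=
    hK.dist_le_mul _ (hball hb2) _ (hball hb1)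
  have hdd : dist (p.1 + p.2 • z) p.1 = p.2 * ‖z‖ := by
    rw [dist_eq_norm]
    have : p.1 + p.2 • z - p.1 = p.2 • z := by abel
    rw [this, norm_smul, Real.norm_eq_abs, abs_of_pos hp2']
  rw [Real.dist_eq, hdd] at hd
  have habs : |cq φ z p| = |φ (p.1 + p.2 • z) - φ p.1| / p.2 := by
    rw [cq, abs_div, abs_of_pos hp2']
  rw [habs, div_le_iff₀ hp2']
  calc |φ (p.1 + p.2 • z) - φ p.1| ≤ (K:ℝ) * (p.2 * ‖z‖) := hd
    _ = (K:ℝ) * ‖z‖ * p.2 := by ring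

lemma clarkeDeriv_le_bound (hφ : LocallyLipschitz φ) (y : Y) :
    ∃ K : ℝ, 0 ≤ K ∧ ∀ z : Y, clarkeDeriv φ y z ≤ K * ‖z‖ := by
  obtain ⟨K, hK0, hb⟩ := cq_bound φ hφ y
  refine ⟨K, hK0, fun z => ?_⟩
  rw [clarkeDeriv_eq]
  exact Filter.limsup_le_of_le (cobdd_of_abs (hb z))
    ((hb z).mono fun p hp => (abs_le.1 hp).2)

lemma clarkeDeriv_zero_dir (φ : Y → ℝ) (y : Y) : clarkeDeriv φ y (0 : Y) = 0 := by
  rw [clarkeDeriv_eq]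
  have : cq φ (0:Y) = fun _ => (0:ℝ) := by
    funext p; simp [cq]
  rw [this]
  exact Filter.limsup_const 0

lemma eventually_cq_lt (hφ : LocallyLipschitz φ) {y z : Y} {r : ℝ}
    (h : clarkeDeriv φ y z < r) : ∀ᶠ p in cf y, cq φ z p < r := by
  obtain ⟨K, hK0, hb⟩ := cq_bound φ hφ y
  exact eventually_lt_of_limsup_lt h (bdd_above_of_abs (hb z))

lemma eventually_slice_lt (hφ : LocallyLipschitz φ) {y z : Y} {r : ℝ}
    (h : clarkeDeriv φ y z < r) :
    ∀ᶠ lam in nhdsWithin (0:ℝ) (Set.Ioi 0), (φ (y + lam • z) - φ y) / lam < r := by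
  have h2 := eventually_cq_lt hφ h
  have hle : (pure y ×ˢ nhdsWithin (0:ℝ) (Set.Ioi 0)) ≤ cf y :=
    Filter.prod_mono (pure_le_nhds y) le_rfl
  have h3 := h2.filter_mono hle
  rw [Filter.pure_prod, eventually_map] at h3
  exact h3

lemma clarkeDeriv_nonneg_of_min (hφ : LocallyLipschitz φ) {y : Y}
    (hmin : ∀ w, φ y ≤ φ w) (z : Y) : 0 ≤ clarkeDeriv φ y z := by
  by_contra hlt
  push_neg at hlt
  obtain ⟨lam, hlam, hmem⟩ :=
    ((eventually_slice_lt hφ hlt).and self_mem_nhdsWithin).exists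
  have h0 : 0 ≤ (φ (y + lam • z) - φ y) / lam :=
    div_nonneg (by linarith [hmin (y + lam • z)]) (le_of_lt hmem)
  linarith

lemma clarkeDeriv_smul_le (hφ : LocallyLipschitz φ) (y z : Y) {c : ℝ} (hc : 0 < c) :
    clarkeDeriv φ y (c • z) ≤ c * clarkeDeriv φ y z := by
  obtain ⟨K, hK0, hb⟩ := cq_bound φ hφ y
  rw [clarkeDeriv_eq]
  apply real_limsup_le_of_forall_gt (cobdd_of_abs (hb (c • z)))
  intro r hr
  have h1 : clarkeDeriv φ y z < r / c := by
    rw [lt_div_iff₀ hc]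
    linarith [hr]
  have h2 := eventually_cq_lt hφ h1
  have hmul : Filter.Tendsto (fun x : ℝ => c * x)
      (nhdsWithin (0:ℝ) (Set.Ioi 0)) (nhdsWithin (0:ℝ) (Set.Ioi 0)) := by
    apply tendsto_nhdsWithin_of_tendsto_nhds_of_eventually_within
    · have hcont : Continuous (fun x : ℝ => c * x) := continuous_const.mul continuous_id
      have h := hcont.tendsto (0:ℝ)
      simp only [mul_zero] at h
      exact h.mono_left nhdsWithin_le_nhds
    · filter_upwards [self_mem_nhdsWithin] with x hx
      exact mul_pos hc hx
  have hm : Filter.Tendsto (fun p : Y × ℝ => (p.1, c * p.2)) (cf y) (cf y) :=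
    Filter.Tendsto.prodMap tendsto_id hmul
  filter_upwards [hm.eventually h2, eventually_pos y] with p hp hpos
  have hid : cq φ (c • z) p = c * cq φ z (p.1, c * p.2) := by
    simp only [cq]
    have he : p.2 • (c • z) = (c * p.2) • z := by rw [smul_smul, mul_comm]
    rw [he]
    field_simp
  rw [hid]
  have : c * cq φ z (p.1, c * p.2) < c * (r / c) := by
    exact mul_lt_mul_of_pos_left hp hc
  rw [mul_div_cancel₀ _ hc.ne'] at this
  exact this.le

lemma clarkeDeriv_add_le (hφ : LocallyLipschitz φ) (y z₁ z₂ : Y) :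
    clarkeDeriv φ y (z₁ + z₂) ≤ clarkeDeriv φ y z₁ + clarkeDeriv φ y z₂ := by
  obtain ⟨K, hK0, hb⟩ := cq_bound φ hφ y
  rw [clarkeDeriv_eq]
  apply real_limsup_le_of_forall_gt (cobdd_of_abs (hb (z₁ + z₂)))
  intro r hr
  set ε := (r - (clarkeDeriv φ y z₁ + clarkeDeriv φ y z₂)) / 2 with hε
  have hεpos : 0 < ε := by simp only [hε]; linarith
  have h1 : clarkeDeriv φ y z₁ < clarkeDeriv φ y z₁ + ε := by linarith
  have h2 : clarkeDeriv φ y z₂ < clarkeDeriv φ y z₂ + ε := by linarith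
  have hm : Filter.Tendsto (fun p : Y × ℝ => (p.1 + p.2 • z₂, p.2)) (cf y) (cf y) := by
    unfold cf
    apply Filter.Tendsto.prodMk
    · have hcont : Continuous (fun p : Y × ℝ => p.1 + p.2 • z₂) := by continuity
      have h := hcont.tendsto (y, 0)
      simp only [zero_smul, add_zero] at h
      apply h.mono_left
      calc (nhds y) ×ˢ (nhdsWithin (0:ℝ) (Set.Ioi 0))
          ≤ (nhds y) ×ˢ (nhds 0) := Filter.prod_mono le_rfl nhdsWithin_le_nhds
        _ = nhds (y, 0) := (nhds_prod_eq).symm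
    · exact Filter.tendsto_snd
  filter_upwards [hm.eventually (eventually_cq_lt hφ h1), eventually_cq_lt hφ h2] with p hp1 hp2
  have hid : cq φ (z₁ + z₂) p = cq φ z₁ (p.1 + p.2 • z₂, p.2) + cq φ z₂ p := by
    simp only [cq]
    have he : p.1 + p.2 • (z₁ + z₂) = p.1 + p.2 • z₂ + p.2 • z₁ := by
      rw [smul_add]; abel
    rw [he]
    ring
  rw [hid]
  have : ε + ε = r - (clarkeDeriv φ y z₁ + clarkeDeriv φ y z₂) := by
    simp only [hε]; ring
  linarith

lemma clarkeDeriv_comp_le {X : Type*} [NormedAddCommGroup X] [NormedSpace ℝ X]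
    (φ : X → ℝ) (hφ : LocallyLipschitz φ) (T : Y →L[ℝ] X) (y d : Y) :
    clarkeDeriv (fun w => φ (T w)) y d ≤ clarkeDeriv φ (T y) (T d) := by
  obtain ⟨K, hK0, hb⟩ := cq_bound φ hφ (T y)
  have hm : Filter.Tendsto (fun p : Y × ℝ => (T p.1, p.2)) (cf y) (cf (T y)) :=
    Filter.Tendsto.prodMap (T.continuous.tendsto y) tendsto_id
  have hid : ∀ p : Y × ℝ, cq (fun w => φ (T w)) d p = cq φ (T d) (T p.1, p.2) := by
    intro p
    simp only [cq, map_add, ContinuousLinearMap.map_smul]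
  rw [clarkeDeriv_eq]
  apply real_limsup_le_of_forall_gt
  · apply cobdd_of_abs (c := K * ‖T d‖)
    filter_upwards [hm.eventually (hb (T d))] with p hp
    rw [hid p]; exact hp
  · intro r hr
    filter_upwards [hm.eventually (eventually_cq_lt hφ hr)] with p hp
    rw [hid p]; exact hp.le

lemma exists_subgrad (φ : Y → ℝ) (hφ : LocallyLipschitz φ) (y : Y) :
    ∃ ξ : Y →L[ℝ] ℝ, ξ ∈ clarkeSubdiff φ y := by
  obtain ⟨K, hK0, hNle⟩ := clarkeDeriv_le_bound hφ y
  set N : Y → ℝ := fun z => clarkeDeriv φ y z with hN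
  have N_hom : ∀ c : ℝ, 0 < c → ∀ x, N (c • x) = c * N x := by
    intro c hc x
    refine le_antisymm (clarkeDeriv_smul_le hφ y x hc) ?_
    have h := clarkeDeriv_smul_le hφ y (c • x) (inv_pos.2 hc)
    rw [smul_smul, inv_mul_cancel₀ hc.ne', one_smul] at h
    calc c * N x ≤ c * (c⁻¹ * N (c • x)) := by
          exact mul_le_mul_of_nonneg_left h hc.le
      _ = N (c • x) := by field_simp
  have N_add : ∀ x y', N (x + y') ≤ N x + N y' := fun x y' => clarkeDeriv_add_le hφ y x y'
  have hf0 : ∀ x : (LinearMap.toPMap (0 : Y →ₗ[ℝ] ℝ) ⊥).domain,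
      (LinearMap.toPMap (0 : Y →ₗ[ℝ] ℝ) ⊥) x ≤ N x := by
    rintro ⟨x, hx⟩
    have hx0 : x = 0 := by
      simpa [LinearMap.toPMap] using hx
    subst hx0
    have h1 : N ((0:Y)) = 0 := clarkeDeriv_zero_dir φ y
    simp [LinearMap.toPMap, h1]
  obtain ⟨gl, _, hgle⟩ :=
    exists_extension_of_le_sublinear (LinearMap.toPMap (0 : Y →ₗ[ℝ] ℝ) ⊥) N N_hom N_add hf0
  have hbd : ∀ x : Y, ‖gl x‖ ≤ K * ‖x‖ := by
    intro x
    rw [Real.norm_eq_abs, abs_le]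
    constructor
    · have h1 := (hgle (-x)).trans (hNle (-x))
      rw [map_neg, norm_neg] at h1
      linarith
    · exact (hgle x).trans (hNle x)
  exact ⟨LinearMap.mkContinuous gl K hbd, fun z => hgle z⟩

end Clarke

namespace Clarke

variable {Y : Type*} [NormedAddCommGroup Y] [NormedSpace ℝ Y] {φ : Y → ℝ}

lemma cf_le_nhds (y : Y) : cf y ≤ nhds (y, (0:ℝ)) := by
  rw [nhds_prod_eq]
  exact Filter.prod_mono le_rfl nhdsWithin_le_nhds

/-- Mean value type bound via the Clarke derivative along a segment. -/
lemma segment_bound (hφ : LocallyLipschitz φ) (v : Y) (M : ℝ)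
    (hM : ∀ t ∈ Set.Ico (0:ℝ) 1, clarkeDeriv φ ((1 - t) • v) (-v) ≤ M) :
    φ 0 - φ v ≤ M := by
  set gfun : ℝ → ℝ := fun t => φ ((1 - t) • v) with hg
  have hgc : Continuous gfun := by
    apply hφ.continuous.comp
    exact (continuous_const.sub continuous_id).smul continuous_const
  have key : ∀ x ∈ Set.Icc (0:ℝ) 1, gfun x ≤ gfun 0 + M * x := by
    apply image_le_of_liminf_slope_right_le_deriv_boundary (B := fun t => gfun 0 + M * t)
      (B' := fun _ => M)
    · exact hgc.continuousOn
    · simp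
    · exact (continuous_const.add (continuous_const.mul continuous_id)).continuousOn
    · intro x _
      have h1 : HasDerivWithinAt (fun t : ℝ => M * t) (M * 1) (Set.Ici x) x :=
        ((hasDerivAt_id x).const_mul M).hasDerivWithinAt
      simpa using h1.const_add (gfun 0)
    · intro x hx r hr
      have hcd : clarkeDeriv φ ((1 - x) • v) (-v) < r := lt_of_le_of_lt (hM x hx) hr
      have hev := eventually_slice_lt hφ hcd
      have ht : Filter.Tendsto (fun z : ℝ => z - x)
          (nhdsWithin x (Set.Ioi x)) (nhdsWithin (0:ℝ) (Set.Ioi 0)) := by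
        apply tendsto_nhdsWithin_of_tendsto_nhds_of_eventually_within
        · have hcont2 : Continuous (fun z : ℝ => z - x) := continuous_id.sub continuous_const
          have h := hcont2.tendsto x
          simp only [sub_self] at h
          exact h.mono_left nhdsWithin_le_nhds
        · filter_upwards [self_mem_nhdsWithin] with z hz
          exact sub_pos.2 (Set.mem_Ioi.1 hz)
      apply Filter.Eventually.frequently
      filter_upwards [ht.eventually hev] with z hz
      have harg : (1 - x) • v + (z - x) • (-v) = (1 - z) • v := by
        rw [smul_neg, ← sub_eq_add_neg, ← sub_smul]
        congr 1
        ring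
      rw [slope_def_field]
      rw [harg] at hz
      exact hz
  have := key 1 (by norm_num)
  simp only [hg] at this ⊢
  norm_num at this
  linarith

/-- The quadratic form of a continuous bilinear map is locally Lipschitz. -/
lemma locallyLipschitz_quadratic (A : Y →L[ℝ] Y →L[ℝ] ℝ) :
    LocallyLipschitz fun x : Y => (1/2 : ℝ) * A x x := by
  intro x₀
  refine ⟨Real.toNNReal (‖A‖ * (‖x₀‖ + 1)), Metric.ball x₀ 1, Metric.ball_mem_nhds _ one_pos, ?_⟩
  apply LipschitzOnWith.of_dist_le_mul
  intro u hu w hw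
  rw [Metric.mem_ball, dist_eq_norm] at hu hw
  have hun : ‖u‖ ≤ ‖x₀‖ + 1 := by
    have := norm_sub_norm_le u x₀
    linarith
  have hwn : ‖w‖ ≤ ‖x₀‖ + 1 := by
    have := norm_sub_norm_le w x₀
    linarith
  have hsplit : A u u - A w w = A u (u - w) + A (u - w) w := by
    rw [(A u).map_sub, map_sub A u w, ContinuousLinearMap.sub_apply]
    ring
  have h1 : |A u (u - w)| ≤ ‖A‖ * (‖x₀‖ + 1) * ‖u - w‖ := by
    calc |A u (u - w)| ≤ ‖A u‖ * ‖u - w‖ := (A u).le_opNorm _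
      _ ≤ ‖A‖ * ‖u‖ * ‖u - w‖ :=
          mul_le_mul_of_nonneg_right (A.le_opNorm u) (norm_nonneg _)
      _ ≤ ‖A‖ * (‖x₀‖ + 1) * ‖u - w‖ := by
          have h0 : (0:ℝ) ≤ ‖A‖ := A.opNorm_nonneg
          have h2 : (0:ℝ) ≤ ‖u - w‖ := norm_nonneg _
          exact mul_le_mul_of_nonneg_right (mul_le_mul_of_nonneg_left hun h0) h2
  have h2 : |A (u - w) w| ≤ ‖A‖ * (‖x₀‖ + 1) * ‖u - w‖ := by
    calc |A (u - w) w| ≤ ‖A (u - w)‖ * ‖w‖ := (A (u - w)).le_opNorm _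
      _ ≤ ‖A‖ * ‖u - w‖ * ‖w‖ :=
          mul_le_mul_of_nonneg_right (A.le_opNorm _) (norm_nonneg _)
      _ ≤ ‖A‖ * (‖x₀‖ + 1) * ‖u - w‖ := by
          have h0 : (0:ℝ) ≤ ‖A‖ := A.opNorm_nonneg
          have h3 : (0:ℝ) ≤ ‖u - w‖ := norm_nonneg _
          nlinarith [mul_le_mul_of_nonneg_right (mul_le_mul_of_nonneg_left hwn h0) h3]
  have hnn : (0:ℝ) ≤ ‖A‖ * (‖x₀‖ + 1) := by positivity
  rw [Real.coe_toNNReal _ hnn, Real.dist_eq, dist_eq_norm]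
  have habs : |(1/2 : ℝ) * A u u - (1/2 : ℝ) * A w w| = |A u u - A w w| / 2 := by
    rw [show (1/2 : ℝ) * A u u - (1/2 : ℝ) * A w w = (A u u - A w w)/2 by ring,
      abs_div]
    norm_num
  rw [habs, hsplit]
  have := (abs_add_le (A u (u - w)) (A (u - w) w)).trans (add_le_add h1 h2)
  linarith

end Clarke

/-- The discrete integration operator `(K^k v)_j = k ∑_{i=1}^j v_i + u₀ʰ`. -/
noncomputable def Kk {W : Type*} [AddCommMonoid W] [Module ℝ W]
    (k : ℝ) (u0h : W) (v : ℕ → W) (j : ℕ) : W :=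
  k • (∑ i ∈ Finset.Icc 1 j, v i) + u0h

/-- The functional `L(w) = ½⟨Aw,w⟩ + ⟨Bz − g, w⟩ + J(γz, γw)`. -/
noncomputable def Lfun {V X : Type*} [NormedAddCommGroup V] [NormedSpace ℝ V]
    [NormedAddCommGroup X] [NormedSpace ℝ X]
    (γ : V →L[ℝ] X) (A : V →L[ℝ] V →L[ℝ] ℝ) (B : V → V →L[ℝ] ℝ)
    (J : X → X → ℝ) (z : V) (g : V →L[ℝ] ℝ) (w : V) : ℝ :=
  (1 / 2) * A w w + (B z - g) w + J (γ z) (γ w)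

/-- Problem `P_incl^h`: the discrete operator-inclusion problem. -/
def SolIncl {V X : Type*} [NormedAddCommGroup V] [NormedSpace ℝ V]
    [NormedAddCommGroup X] [NormedSpace ℝ X]
    (γ : V →L[ℝ] X) (A : V →L[ℝ] V →L[ℝ] ℝ) (B : V → V →L[ℝ] ℝ)
    (J : X → X → ℝ) (f : ℝ → V →L[ℝ] ℝ)
    (Vh : Submodule ℝ V) (u0h : Vh) (k : ℝ) (N : ℕ) (v : ℕ → Vh) : Prop :=
  ∀ j ∈ Finset.Icc 1 N,
    ∃ ζ ∈ clarkeSubdiff (J (γ ↑(Kk k u0h v (j - 1)))) (γ ↑(v j)),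
      ∀ wh ∈ Vh,
        A ↑(v j) wh + B ↑(Kk k u0h v (j - 1)) wh + ζ (γ wh) = f ((j : ℝ) * k) wh

/-- Problem `P_opt^h`: `0 ∈ ∂(L_j|_{V^h})(v_j)` for `j = 1, …, N`. -/
def SolOpt {V X : Type*} [NormedAddCommGroup V] [NormedSpace ℝ V]
    [NormedAddCommGroup X] [NormedSpace ℝ X]
    (γ : V →L[ℝ] X) (A : V →L[ℝ] V →L[ℝ] ℝ) (B : V → V →L[ℝ] ℝ)
    (J : X → X → ℝ) (f : ℝ → V →L[ℝ] ℝ)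
    (Vh : Submodule ℝ V) (u0h : Vh) (k : ℝ) (N : ℕ) (v : ℕ → Vh) : Prop :=
  ∀ j ∈ Finset.Icc 1 N,
    (0 : Vh →L[ℝ] ℝ) ∈ clarkeSubdiff
      (fun x : Vh => Lfun γ A B J (↑(Kk k u0h v (j - 1))) (f ((j : ℝ) * k)) ↑x) (v j)

section CoreSec
variable {V X : Type*} [NormedAddCommGroup V] [NormedSpace ℝ V]
    [NormedAddCommGroup X] [NormedSpace ℝ X]

lemma aux_sq2 {a b c : ℝ} (ha : 0 ≤ a) (h : a ≤ b * c) : a^2 ≤ b^2 * c^2 := by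
  have h1 : a*a ≤ (b*c)*(b*c) := mul_le_mul h h ha (ha.trans h)
  nlinarith [h1]

lemma aux_sq {m a b c : ℝ} (hm : 0 ≤ m) (ha : 0 ≤ a) (h : a ≤ b * c) :
    m * a^2 ≤ m * b^2 * c^2 := by
  calc m * a^2 ≤ m * (b^2 * c^2) := mul_le_mul_of_nonneg_left (aux_sq2 ha h) hm
    _ = m * b^2 * c^2 := by ring

lemma aux_coer {α β f0 p0 w fw : ℝ} (hα : 0 < α) (hβ0 : 0 ≤ β)
    (hw : (β + |f0| + |p0| + 1)/α + 1 < w)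
    (hco : α * w^2 - β * w + p0 ≤ fw) : f0 < fw := by
  have hQ0 : 0 ≤ β + |f0| + |p0| + 1 := by positivity
  have hw1 : 1 < w := by
    have := div_nonneg hQ0 hα.le
    linarith
  have h2 : (β + |f0| + |p0| + 1)/α < w := by linarith
  have hαw : β + |f0| + |p0| + 1 < α * w := by
    calc β + |f0| + |p0| + 1 = ((β + |f0| + |p0| + 1)/α) * α := by field_simp
      _ < w * α := mul_lt_mul_of_pos_right h2 hα
      _ = α * w := mul_comm _ _
  have h3 : (β + |f0| + |p0| + 1) * w < α * w * w := mul_lt_mul_of_pos_right hαw (by linarith)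
  have ha : |f0| ≤ |f0| * w := le_mul_of_one_le_right (abs_nonneg _) hw1.le
  have hb : |p0| ≤ |p0| * w := le_mul_of_one_le_right (abs_nonneg _) hw1.le
  have hexp : (β + |f0| + |p0| + 1) * w = β * w + |f0| * w + |p0| * w + w := by ring
  have h6 : α * w * w = α * w^2 := by ring
  have h7 : f0 ≤ |f0| := le_abs_self _
  have h8 : -|p0| ≤ p0 := neg_abs_le _
  nlinarith

lemma aux_uniq {D1 D2 a1 a2 l1 l2 p1 p2 q s mA mJ1 g2 n2 : ℝ}
    (h1 : 0 ≤ D1) (h2 : 0 ≤ D2) (d1 : D1 ≤ a1 + l1 + p1) (d2 : D2 ≤ a2 + l2 + p2)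
    (hA : a1 + a2 = -q) (hl : l1 + l2 = 0) (hp : p1 + p2 ≤ mJ1 * s)
    (hq : mA * n2 ≤ q) (hsg : mJ1 * s ≤ mJ1 * (g2 * n2))
    (hpos : 0 < mA - mJ1 * g2) (hn2 : 0 ≤ n2) : n2 = 0 := by
  have hexp : (mA - mJ1*g2) * n2 = mA*n2 - mJ1*(g2*n2) := by ring
  have hle : (mA - mJ1*g2) * n2 ≤ 0 := by rw [hexp]; linarith
  by_contra hne
  have hgt : 0 < n2 := lt_of_le_of_ne hn2 (Ne.symm hne)
  nlinarith [mul_pos hpos hgt]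

theorem core_lemma
    (γ : V →L[ℝ] X) (A : V →L[ℝ] V →L[ℝ] ℝ)
    (hAsym : ∀ u v : V, A u v = A v u)
    (mA : ℝ) (hAco : ∀ u : V, mA * ‖u‖ ^ 2 ≤ A u u)
    (B : V → V →L[ℝ] ℝ)
    (J : X → X → ℝ) (hJa : ∀ w : X, LocallyLipschitz (J w))
    (c₀ c₁ c₂ : ℝ)
    (hJb : ∀ w v : X, ∀ ξ ∈ clarkeSubdiff (J w) v, ‖ξ‖ ≤ c₀ + c₁ * ‖w‖ + c₂ * ‖v‖)
    (mJ1 mJ2 : ℝ) (hmJ1 : 0 ≤ mJ1)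
    (hJc : ∀ w₁ w₂ v₁ v₂ : X,
      clarkeDeriv (J w₁) v₁ (v₂ - v₁) + clarkeDeriv (J w₂) v₂ (v₁ - v₂) ≤
        mJ1 * ‖v₁ - v₂‖ ^ 2 + mJ2 * ‖w₁ - w₂‖ * ‖v₁ - v₂‖)
    (hs : 0 < mA - 2 * mJ1 * ‖γ‖ ^ 2)
    (Vh : Submodule ℝ V) [FiniteDimensional ℝ Vh]
    (z : V) (g : V →L[ℝ] ℝ) :
    (∃ x : Vh, ∀ w : Vh, Lfun γ A B J z g ↑x ≤ Lfun γ A B J z g ↑w) ∧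
    (∀ x : Vh, (∀ w : Vh, Lfun γ A B J z g ↑x ≤ Lfun γ A B J z g ↑w) →
      (0 : Vh →L[ℝ] ℝ) ∈ clarkeSubdiff (fun x : Vh => Lfun γ A B J z g ↑x) x) ∧
    (∀ x x' : Vh,
      (0 : Vh →L[ℝ] ℝ) ∈ clarkeSubdiff (fun x : Vh => Lfun γ A B J z g ↑x) x →
      (0 : Vh →L[ℝ] ℝ) ∈ clarkeSubdiff (fun x : Vh => Lfun γ A B J z g ↑x) x' →
      x = x') := by
  classical
  set ψ : X → ℝ := J (γ z) with hψdef
  have hψ : LocallyLipschitz ψ := hJa (γ z)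
  set ℓ : V →L[ℝ] ℝ := B z - g with hℓdef
  set T : Vh →L[ℝ] X := γ.comp (Vh.subtypeL) with hTdef
  have hTx : ∀ x : Vh, T x = γ ↑x := fun x => rfl
  set φ : Vh → ℝ := fun x => Lfun γ A B J z g ↑x with hφdef
  have hφeq : ∀ x : Vh, φ x = (1/2 : ℝ) * A ↑x ↑x + ℓ ↑x + ψ (T x) := fun x => rfl
  -- local Lipschitzness of the full functional
  set A' : Vh →L[ℝ] Vh →L[ℝ] ℝ := ((A.comp Vh.subtypeL).flip.comp Vh.subtypeL).flip with hA'
  have hA'app : ∀ x y : Vh, A' x y = A ↑x ↑y := fun x y => rfl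
  have hφLL : LocallyLipschitz φ := by
    have h1 : LocallyLipschitz fun x : Vh => (1/2 : ℝ) * A' x x :=
      Clarke.locallyLipschitz_quadratic A'
    have h2 : LocallyLipschitz fun x : Vh => ℓ ↑x :=
      (ℓ.comp Vh.subtypeL).lipschitz.locallyLipschitz
    have h3 : LocallyLipschitz fun x : Vh => ψ (T x) :=
      hψ.comp T.lipschitz.locallyLipschitz
    have h4 := (h1.add h2).add h3
    have : φ = fun x : Vh => ((1/2 : ℝ) * A' x x + ℓ ↑x) + ψ (T x) := by
      funext x
      rw [hφeq, hA'app]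
    rw [this]
    exact h4
  -- coercive norm estimate for T
  have hTnorm : ∀ x : Vh, ‖T x‖ ≤ ‖γ‖ * ‖x‖ := by
    intro x
    calc ‖T x‖ = ‖γ (↑x : V)‖ := by rw [hTx]
      _ ≤ ‖γ‖ * ‖(↑x : V)‖ := γ.le_opNorm _
      _ = ‖γ‖ * ‖x‖ := by rw [Submodule.norm_coe]
  -- (K1) decomposition of the Clarke derivative
  have hdecomp : ∀ x d : Vh, clarkeDeriv φ x d
      ≤ A ↑x ↑d + ℓ ↑d + clarkeDeriv ψ (T x) (T d) := by
    intro x d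
    obtain ⟨K, hK0, hb⟩ := Clarke.cq_bound ψ hψ (T x)
    have hm : Filter.Tendsto (fun p : Vh × ℝ => (T p.1, p.2))
        (Clarke.cf x) (Clarke.cf (T x)) :=
      Filter.Tendsto.prodMap (T.continuous.tendsto x) tendsto_id
    have hiq : ∀ p : Vh × ℝ, Clarke.cq φ d p
        = Clarke.cq (fun w : Vh => (1/2 : ℝ) * A ↑w ↑w) d p
          + Clarke.cq (fun w : Vh => ℓ ↑w) d p
          + Clarke.cq ψ (T d) (T p.1, p.2) := by
      intro p
      have h1 : T (p.1 + p.2 • d) = T p.1 + p.2 • T d := by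
        rw [map_add, ContinuousLinearMap.map_smul]
      simp only [Clarke.cq, hφeq, h1]
      ring
    -- the quadratic part converges
    have hexp : ∀ (a b : V) (t : ℝ), A (a + t • b) (a + t • b)
        = A a a + t * A a b + t * A b a + t * t * A b b := by
      intro a b t
      simp only [map_add, ContinuousLinearMap.map_smul, ContinuousLinearMap.add_apply,
        ContinuousLinearMap.smul_apply, smul_eq_mul]
      ring
    have hqeq : ∀ᶠ p in Clarke.cf x, Clarke.cq (fun w : Vh => (1/2 : ℝ) * A ↑w ↑w) d p
        = (A ↑p.1 ↑d + A ↑d ↑p.1)/2 + p.2 * ((1/2 : ℝ) * A ↑d ↑d) := by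
      filter_upwards [Clarke.eventually_pos x] with p hp
      have hco : ((p.1 + p.2 • d : Vh) : V) = (↑p.1 : V) + p.2 • (↑d : V) := by simp
      simp only [Clarke.cq, hco, hexp]
      field_simp
      ring
    have hqcont : Continuous
        (fun p : Vh × ℝ => (A ↑p.1 ↑d + A ↑d ↑p.1)/2 + p.2 * ((1/2 : ℝ) * A ↑d ↑d)) := by
      apply Continuous.add
      · apply Continuous.div_const
        apply Continuous.add
        · have hc : Continuous fun p : Vh × ℝ => (A.flip (↑d : V)) ((↑p.1 : V)) :=
            (A.flip (↑d : V)).continuous.comp (continuous_subtype_val.comp continuous_fst)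
          simpa [ContinuousLinearMap.flip_apply] using hc
        · exact (A (↑d : V)).continuous.comp (continuous_subtype_val.comp continuous_fst)
      · exact continuous_snd.mul continuous_const
    have hq : Filter.Tendsto (Clarke.cq (fun w : Vh => (1/2 : ℝ) * A ↑w ↑w) d)
        (Clarke.cf x) (nhds (A ↑x ↑d)) := by
      have h0 := (hqcont.tendsto (x, 0)).mono_left (Clarke.cf_le_nhds x)
      have hval : (A ↑x ↑d + A ↑d ↑x)/2 + (0:ℝ) * ((1/2 : ℝ) * A ↑d ↑d) = A ↑x ↑d := by
        rw [hAsym (↑d : V) ↑x]; ring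
      rw [hval] at h0
      exact h0.congr' (hqeq.mono fun p hp => hp.symm)
    -- the linear part is eventually constant
    have hleq : ∀ᶠ p in Clarke.cf x, Clarke.cq (fun w : Vh => ℓ ↑w) d p = ℓ ↑d := by
      filter_upwards [Clarke.eventually_pos x] with p hp
      have hco : ((p.1 + p.2 • d : Vh) : V) = (↑p.1 : V) + p.2 • (↑d : V) := by simp
      simp only [Clarke.cq, hco, map_add, ContinuousLinearMap.map_smul, smul_eq_mul]
      field_simp
      ring
    -- bound for the composite part
    have hψb : ∀ᶠ p in Clarke.cf x, |Clarke.cq ψ (T d) (T p.1, p.2)| ≤ K * ‖T d‖ :=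
      hm.eventually (hb (T d))
    -- coboundedness
    have hqabs : ∀ᶠ p in Clarke.cf x,
        |Clarke.cq (fun w : Vh => (1/2 : ℝ) * A ↑w ↑w) d p| ≤ |A ↑x ↑d| + 1 := by
      have h1 := Metric.tendsto_nhds.1 hq 1 one_pos
      filter_upwards [h1] with p hp
      rw [Real.dist_eq] at hp
      have := abs_sub_abs_le_abs_sub (Clarke.cq (fun w : Vh => (1/2 : ℝ) * A ↑w ↑w) d p)
        (A ↑x ↑d)
      linarith
    have habs : ∀ᶠ p in Clarke.cf x,
        |Clarke.cq φ d p| ≤ (|A ↑x ↑d| + 1) + |ℓ ↑d| + K * ‖T d‖ := by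
      filter_upwards [hqabs, hleq, hψb] with p h1 h2 h3
      rw [hiq p, h2]
      have h4 := abs_add_three (Clarke.cq (fun w : Vh => (1/2 : ℝ) * A ↑w ↑w) d p)
        (ℓ ↑d) (Clarke.cq ψ (T d) (T p.1, p.2))
      linarith
    rw [Clarke.clarkeDeriv_eq]
    apply real_limsup_le_of_forall_gt (cobdd_of_abs habs)
    intro r hr
    set ε := (r - (A ↑x ↑d + ℓ ↑d + clarkeDeriv ψ (T x) (T d)))/2 with hε
    have hεpos : 0 < ε := by rw [hε]; linarith
    have he1 : ∀ᶠ p in Clarke.cf x,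
        Clarke.cq (fun w : Vh => (1/2 : ℝ) * A ↑w ↑w) d p < A ↑x ↑d + ε := by
      have h1 := Metric.tendsto_nhds.1 hq ε hεpos
      filter_upwards [h1] with p hp
      rw [Real.dist_eq] at hp
      have := (abs_lt.1 hp).2
      linarith
    have he3 : ∀ᶠ p in Clarke.cf x,
        Clarke.cq ψ (T d) (T p.1, p.2) < clarkeDeriv ψ (T x) (T d) + ε :=
      hm.eventually (Clarke.eventually_cq_lt hψ (by linarith))
    filter_upwards [he1, hleq, he3] with p h1 h2 h3
    rw [hiq p, h2]
    have : ε + ε = r - (A ↑x ↑d + ℓ ↑d + clarkeDeriv ψ (T x) (T d)) := by rw [hε]; ring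
    linarith
  -- (K2) lower bound for ψ
  obtain ⟨ξ, hξ⟩ := Clarke.exists_subgrad ψ hψ 0
  have hξn : ‖ξ‖ ≤ c₀ + c₁ * ‖γ z‖ := by
    have h := hJb (γ z) 0 ξ hξ
    simpa using h
  set Cψ := c₀ + c₁ * ‖γ z‖ with hCψ
  have hCψ0 : 0 ≤ Cψ := le_trans (norm_nonneg ξ) hξn
  have hψlow : ∀ u : X, ψ 0 - ψ u ≤ mJ1 * ‖u‖^2 + Cψ * ‖u‖ := by
    intro u
    apply Clarke.segment_bound hψ
    intro t ht
    set s := 1 - t with hsdef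
    have hspos : 0 < s := by rw [hsdef]; linarith [ht.2]
    have hsle : s ≤ 1 := by rw [hsdef]; linarith [ht.1]
    have h1 : clarkeDeriv ψ (s • u) (-(s • u)) + clarkeDeriv ψ 0 (s • u)
        ≤ mJ1 * ‖s • u‖^2 := by
      have h := hJc (γ z) (γ z) (s • u) 0
      simp only [zero_sub, sub_zero, sub_self, norm_zero, mul_zero, zero_mul, add_zero] at h
      exact h
    have hnorm : ‖s • u‖ = s * ‖u‖ := by
      rw [norm_smul, Real.norm_eq_abs, abs_of_pos hspos]
    have h2 : -(Cψ * (s * ‖u‖)) ≤ clarkeDeriv ψ 0 (s • u) := by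
      have hξv := hξ (s • u)
      have hop : |ξ (s • u)| ≤ ‖ξ‖ * ‖s • u‖ := ξ.le_opNorm _
      have hlow : -(‖ξ‖ * ‖s • u‖) ≤ ξ (s • u) := by
        have := (abs_le.1 hop).1
        linarith
      have hmul : ‖ξ‖ * ‖s • u‖ ≤ Cψ * (s * ‖u‖) := by
        rw [hnorm]
        apply mul_le_mul_of_nonneg_right hξn
        positivity
      linarith
    have h3 : clarkeDeriv ψ ((1 - t) • u) (-u)
        ≤ s⁻¹ * clarkeDeriv ψ (s • u) (-(s • u)) := by
      have hcs := Clarke.clarkeDeriv_smul_le hψ (s • u) (-(s • u)) (inv_pos.2 hspos)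
      have harg : s⁻¹ • (-(s • u)) = -u := by
        rw [smul_neg, smul_smul, inv_mul_cancel₀ hspos.ne', one_smul]
      rw [harg] at hcs
      exact hcs
    have h4 : clarkeDeriv ψ (s • u) (-(s • u)) ≤ mJ1 * (s * ‖u‖)^2 + Cψ * (s * ‖u‖) := by
      rw [hnorm] at h1
      linarith
    calc clarkeDeriv ψ ((1 - t) • u) (-u)
        ≤ s⁻¹ * clarkeDeriv ψ (s • u) (-(s • u)) := h3
      _ ≤ s⁻¹ * (mJ1 * (s * ‖u‖)^2 + Cψ * (s * ‖u‖)) :=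
          mul_le_mul_of_nonneg_left h4 (inv_nonneg.2 hspos.le)
      _ = mJ1 * s * ‖u‖^2 + Cψ * ‖u‖ := by
          field_simp
      _ ≤ mJ1 * ‖u‖^2 + Cψ * ‖u‖ := by
          have hsq : 0 ≤ ‖u‖^2 := sq_nonneg _
          have hkey := mul_le_mul_of_nonneg_right
            (mul_le_mul_of_nonneg_left hsle hmJ1) hsq
          nlinarith [hkey]
  -- (K3) coercivity and existence of a minimizer
  set α := (mA - 2*mJ1*‖γ‖^2)/2 with hα
  have hαpos : 0 < α := by rw [hα]; linarith
  set β := ‖ℓ‖ + Cψ * ‖γ‖ with hβ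
  have hβ0 : 0 ≤ β := by
    rw [hβ]
    have := norm_nonneg ℓ
    have := norm_nonneg γ
    positivity
  have hcoer : ∀ x : Vh, α * ‖x‖^2 - β * ‖x‖ + ψ 0 ≤ φ x := by
    intro x
    have e1 : (mA/2) * ‖x‖^2 ≤ (1/2 : ℝ) * A ↑x ↑x := by
      have h := hAco ↑x
      rw [Submodule.norm_coe] at h
      linarith
    have e2 : -(‖ℓ‖ * ‖x‖) ≤ ℓ ↑x := by
      have hop : |ℓ (↑x : V)| ≤ ‖ℓ‖ * ‖(↑x : V)‖ := ℓ.le_opNorm _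
      rw [Submodule.norm_coe] at hop
      linarith [(abs_le.1 hop).1]
    have e3 : ψ 0 - (mJ1 * ‖T x‖^2 + Cψ * ‖T x‖) ≤ ψ (T x) := by
      linarith [hψlow (T x)]
    have e4 : mJ1 * ‖T x‖^2 ≤ mJ1 * ‖γ‖^2 * ‖x‖^2 :=
      aux_sq hmJ1 (norm_nonneg _) (hTnorm x)
    have e5 : Cψ * ‖T x‖ ≤ Cψ * ‖γ‖ * ‖x‖ := by
      have h1 := mul_le_mul_of_nonneg_left (hTnorm x) hCψ0
      linarith [h1]
    rw [hφeq]
    have hαeq : α = mA/2 - mJ1 * ‖γ‖^2 := by rw [hα]; ring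
    rw [hαeq, hβ]
    have e345 : ψ 0 - (mJ1 * ‖γ‖^2 * ‖x‖^2 + Cψ * ‖γ‖ * ‖x‖) ≤ ψ (T x) := by
      linarith [e3, e4, e5]
    have big : (mA / 2 - mJ1 * ‖γ‖ ^ 2) * ‖x‖ ^ 2 - (‖ℓ‖ + Cψ * ‖γ‖) * ‖x‖ + ψ 0
        = mA / 2 * ‖x‖ ^ 2 + (-(‖ℓ‖ * ‖x‖))
          + (ψ 0 - (mJ1 * ‖γ‖^2 * ‖x‖^2 + Cψ * ‖γ‖ * ‖x‖)) := by ring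
    rw [big]
    exact add_le_add (add_le_add e1 e2) e345
  have hcont : Continuous φ := hφLL.continuous
  set Q := β + |φ 0| + |ψ 0| + 1 with hQdef
  have hQ0 : 0 ≤ Q := by rw [hQdef]; positivity
  set R := Q/α + 1 with hRdef
  have hR0 : 0 ≤ R := by
    rw [hRdef]
    have : 0 ≤ Q/α := by positivity
    linarith
  obtain ⟨xm, hxmem, hxmin⟩ := (isCompact_closedBall (0:Vh) R).exists_isMinOn
    ⟨0, by simp [hR0]⟩ hcont.continuousOn
  have hmin : ∀ w : Vh, φ xm ≤ φ w := by
    intro w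
    by_cases hw : ‖w‖ ≤ R
    · exact hxmin (by simpa [Metric.mem_closedBall, dist_zero_right] using hw)
    · push_neg at hw
      have h0 : φ xm ≤ φ 0 := hxmin (by simp [hR0])
      have hw' : (β + |φ 0| + |ψ 0| + 1)/α + 1 < ‖w‖ := by
        rw [hRdef, hQdef] at hw
        exact hw
      have hfin : φ 0 < φ w := aux_coer hαpos hβ0 hw' (hcoer w)
      linarith
  -- (K4) minimizers are critical points
  have hmin_subdiff : ∀ x : Vh, (∀ w, φ x ≤ φ w) →
      (0 : Vh →L[ℝ] ℝ) ∈ clarkeSubdiff φ x := by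
    intro x hx d
    have := Clarke.clarkeDeriv_nonneg_of_min hφLL hx d
    simpa using this
  -- (K5) uniqueness of critical points
  have huniq : ∀ x x' : Vh, (0 : Vh →L[ℝ] ℝ) ∈ clarkeSubdiff φ x →
      (0 : Vh →L[ℝ] ℝ) ∈ clarkeSubdiff φ x' → x = x' := by
    intro x x' h h'
    have h1 : 0 ≤ clarkeDeriv φ x (x' - x) := by
      have := h (x' - x); simpa using this
    have h2 : 0 ≤ clarkeDeriv φ x' (x - x') := by
      have := h' (x - x'); simpa using this
    have d1 := hdecomp x (x' - x)
    have d2 := hdecomp x' (x - x')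
    have hT1 : T (x' - x) = T x' - T x := map_sub T x' x
    have hT2 : T (x - x') = T x - T x' := map_sub T x x'
    rw [hT1] at d1
    rw [hT2] at d2
    have hJ := hJc (γ z) (γ z) (T x) (T x')
    simp only [sub_self, norm_zero, mul_zero, zero_mul, add_zero] at hJ
    have hc1 : ((x' - x : Vh) : V) = (↑x' : V) - ↑x := by simp
    have hc2 : ((x - x' : Vh) : V) = (↑x : V) - ↑x' := by simp
    have hA : A ↑x ↑(x' - x) + A ↑x' ↑(x - x') = -(A ((↑x : V) - ↑x') ((↑x : V) - ↑x')) := by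
      rw [hc1, hc2]
      simp only [map_sub, ContinuousLinearMap.sub_apply]
      ring
    have hl : ℓ ↑(x' - x) + ℓ ↑(x - x') = 0 := by
      rw [hc1, hc2]
      simp only [map_sub]
      ring
    have hAc := hAco ((↑x : V) - ↑x')
    have hcc : ((↑x : V) - ↑x') = ((x - x' : Vh) : V) := hc2.symm
    have hnc : ‖(↑x : V) - ↑x'‖ = ‖x - x'‖ := by
      rw [hcc, Submodule.norm_coe]
    have hTle : ‖T x - T x'‖ ≤ ‖γ‖ * ‖x - x'‖ := by
      rw [← map_sub]
      exact hTnorm _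
    -- ψ terms: both directions are as in hJc
    have hψsum : clarkeDeriv ψ (T x) (T x' - T x) + clarkeDeriv ψ (T x') (T x - T x')
        ≤ mJ1 * ‖T x - T x'‖^2 := hJ
    have hTsq : ‖T x - T x'‖^2 ≤ ‖γ‖^2 * ‖x - x'‖^2 :=
      aux_sq2 (norm_nonneg _) hTle
    have hq : mA * ‖x - x'‖^2 ≤ A ((↑x : V) - ↑x') ((↑x : V) - ↑x') := by
      have := hAco ((↑x : V) - ↑x')
      rw [hnc] at this
      exact this
    have hpos : 0 < mA - mJ1 * ‖γ‖^2 := by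
      have := mul_nonneg hmJ1 (sq_nonneg ‖γ‖)
      linarith
    have hsg : mJ1 * ‖T x - T x'‖^2 ≤ mJ1 * (‖γ‖^2 * ‖x - x'‖^2) :=
      mul_le_mul_of_nonneg_left hTsq hmJ1
    have hn2 : ‖x - x'‖^2 = 0 :=
      aux_uniq h1 h2 d1 d2 hA hl hψsum hq hsg hpos (sq_nonneg _)
    have hz : ‖x - x'‖ = 0 := by
      exact pow_eq_zero_iff (by norm_num : (2:ℕ) ≠ 0) |>.mp hn2
    have : x - x' = 0 := norm_eq_zero.1 hz
    exact sub_eq_zero.1 this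
  exact ⟨⟨xm, fun w => hmin w⟩,
    fun x hx => hmin_subdiff x hx,
    huniq⟩

end CoreSec

/-- `L` attains a unique global minimizer over `V^h`; equivalently there is
exactly one `v^h ∈ V^h` with `0 ∈ ∂(L|_{V^h})(v^h)`. Consequently, Problem `P_opt^h` has a
unique solution. -/
theorem unique_minimizer_Popt
    {V X : Type*}
    [NormedAddCommGroup V] [NormedSpace ℝ V] [CompleteSpace V]
    [NormedAddCommGroup X] [NormedSpace ℝ X] [CompleteSpace X]
    -- V reflexive
    (hrefl : Function.Surjective (NormedSpace.inclusionInDoubleDual ℝ V))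
    (γ : V →L[ℝ] X)
    -- H(A)
    (A : V →L[ℝ] V →L[ℝ] ℝ)
    (hAsym : ∀ u v : V, A u v = A v u)
    (mA : ℝ) (hmA : 0 < mA)
    (hAco : ∀ u : V, mA * ‖u‖ ^ 2 ≤ A u u)
    -- H(B)
    (B : V → V →L[ℝ] ℝ)
    (LB : ℝ) (hLB : 0 < LB)
    (hB : ∀ v w : V, ‖B v - B w‖ ≤ LB * ‖v - w‖)
    -- H(J)
    (J : X → X → ℝ)
    (hJa : ∀ w : X, LocallyLipschitz (J w))
    (c₀ c₁ c₂ : ℝ) (hc₀ : 0 ≤ c₀) (hc₁ : 0 ≤ c₁) (hc₂ : 0 ≤ c₂)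
    (hJb : ∀ w v : X, ∀ ξ ∈ clarkeSubdiff (J w) v, ‖ξ‖ ≤ c₀ + c₁ * ‖w‖ + c₂ * ‖v‖)
    (mJ1 mJ2 : ℝ) (hmJ1 : 0 ≤ mJ1) (hmJ2 : 0 ≤ mJ2)
    (hJc : ∀ w₁ w₂ v₁ v₂ : X,
      clarkeDeriv (J w₁) v₁ (v₂ - v₁) + clarkeDeriv (J w₂) v₂ (v₁ - v₂) ≤
        mJ1 * ‖v₁ - v₂‖ ^ 2 + mJ2 * ‖w₁ - w₂‖ * ‖v₁ - v₂‖)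
    -- H(f)
    (T : ℝ) (hT : 0 < T)
    (f : ℝ → V →L[ℝ] ℝ) (hf : ContinuousOn f (Set.Icc 0 T))
    -- H(u₀)
    (u₀ : V)
    -- (H_s)
    (hs : 0 < mA - 2 * mJ1 * ‖γ‖ ^ 2)
    -- discretization
    (Vh : Submodule ℝ V) [FiniteDimensional ℝ Vh] (u0h : Vh)
    (z : V) (g : V →L[ℝ] ℝ) :
    (∃! vh : Vh, ∀ wh : Vh, Lfun γ A B J z g ↑vh ≤ Lfun γ A B J z g ↑wh) ∧
    (∃! vh : Vh, (0 : Vh →L[ℝ] ℝ) ∈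
      clarkeSubdiff (fun x : Vh => Lfun γ A B J z g ↑x) vh) ∧
    (∀ (N : ℕ), 1 ≤ N →
      (∃ v : ℕ → Vh, SolOpt γ A B J f Vh u0h (T / N) N v) ∧
      (∀ v v' : ℕ → Vh, SolOpt γ A B J f Vh u0h (T / N) N v →
        SolOpt γ A B J f Vh u0h (T / N) N v' → ∀ j ∈ Finset.Icc 1 N, v j = v' j)) := by
  classical
  have core := fun (z' : V) (g' : V →L[ℝ] ℝ) =>
    core_lemma γ A hAsym mA hAco B J hJa c₀ c₁ c₂ hJb mJ1 mJ2 hmJ1 hJc hs Vh z' g'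
  obtain ⟨xz, hxz⟩ := (core z g).1
  have hcrit : (0 : Vh →L[ℝ] ℝ) ∈ clarkeSubdiff (fun x : Vh => Lfun γ A B J z g ↑x) xz :=
    (core z g).2.1 xz hxz
  refine ⟨⟨xz, hxz, ?_⟩, ⟨xz, hcrit, ?_⟩, ?_⟩
  · intro y hy
    exact (core z g).2.2 y xz ((core z g).2.1 y hy) hcrit
  · intro y hy
    exact (core z g).2.2 y xz hy hcrit
  · intro N hN
    constructor
    · -- existence by induction on the horizon
      have hex : ∀ n : ℕ, ∃ v : ℕ → Vh, SolOpt γ A B J f Vh u0h (T / N) n v := by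
        intro n
        induction n with
        | zero =>
          exact ⟨fun _ => 0, fun j hj => absurd (Finset.mem_Icc.1 hj) (by omega)⟩
        | succ m ih =>
          obtain ⟨v, hv⟩ := ih
          obtain ⟨xm', hxm'⟩ := (core (↑(Kk (T / N) u0h v m))
            (f (((m + 1 : ℕ) : ℝ) * (T / N)))).1
          have hxmc := (core (↑(Kk (T / N) u0h v m))
            (f (((m + 1 : ℕ) : ℝ) * (T / N)))).2.1 xm' hxm'
          refine ⟨Function.update v (m + 1) xm', ?_⟩
          intro j hj
          rw [Finset.mem_Icc] at hj
          have hKeq : Kk (T / N) u0h (Function.update v (m + 1) xm') (j - 1)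
              = Kk (T / N) u0h v (j - 1) := by
            unfold Kk
            congr 2
            apply Finset.sum_congr rfl
            intro i hi
            rw [Finset.mem_Icc] at hi
            exact Function.update_of_ne (by omega) _ _
          rcases Nat.lt_or_ge j (m + 1) with hlt | hge
          · have hj' : j ∈ Finset.Icc 1 m := Finset.mem_Icc.2 ⟨hj.1, by omega⟩
            have hres := hv j hj'
            rw [hKeq, Function.update_of_ne (by omega : j ≠ m + 1)]
            exact hres
          · have hje : j = m + 1 := by omega
            subst hje
            rw [hKeq, Function.update_self]
            have hm1 : m + 1 - 1 = m := rfl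
            rw [hm1]
            exact hxmc
      exact hex N
    · intro v v' hv hv' j
      induction j using Nat.strong_induction_on with
      | _ j ih =>
        intro hj
        rw [Finset.mem_Icc] at hj
        have hKeq : Kk (T / N) u0h v (j - 1) = Kk (T / N) u0h v' (j - 1) := by
          unfold Kk
          congr 2
          apply Finset.sum_congr rfl
          intro i hi
          rw [Finset.mem_Icc] at hi
          exact ih i (by omega) (Finset.mem_Icc.2 ⟨hi.1, by omega⟩)
        have h1 := hv j (Finset.mem_Icc.2 hj)
        have h2 := hv' j (Finset.mem_Icc.2 hj)
        rw [← hKeq] at h2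
        exact (core (↑(Kk (T / N) u0h v (j - 1))) (f ((j : ℝ) * (T / N)))).2.2
          (v j) (v' j) h1 h2
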